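/- Product formula for the denominator D_L. Let γ ∈ (0,1], let l be a nonnegative integer, and set L = 2l+1 and t_n = √(1−γ²)·tan(nπ/L) for each integer n. Then the complex product ∏_{n=0}^{2l} (1 + i·t_n) equals γ^L · T_L(1/γ), where T_L is the Chebyshev polynomial of the first kind of degree L (evaluated at the real number 1/γ, the result being viewed as a complex number). -/

import Mathlib

open Real

/-- Product formula for the denominator `D_L`: with `L = 2l+1` and
`t_n = √(1−γ²)·tan(nπ/L)`, one has `∏_{n=0}^{2l} (1 + i·t_n) = γ^L · T_L(1/γ)`. -/
theorem denominator_product_formula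
    (γ : ℝ) (hγ : γ ∈ Set.Ioc (0 : ℝ) 1) (l : ℕ) :
    ∏ n ∈ Finset.range (2 * l + 1),
        (1 + Complex.I * ((Real.sqrt (1 - γ ^ 2) * Real.tan ((n : ℝ) * π / (2 * l + 1)) : ℝ) : ℂ))
      = (γ : ℂ) ^ (2 * l + 1)
        * (((Polynomial.Chebyshev.T ℝ (2 * l + 1)).eval (1 / γ) : ℝ) : ℂ) := by
  obtain ⟨hγ0, hγ1⟩ := hγ
  set L : ℕ := 2 * l + 1 with hLdef
  have hL0 : (L : ℝ) ≠ 0 := by positivity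
  have hLodd : Odd L := ⟨l, by omega⟩
  set s : ℝ := Real.sqrt (1 - γ ^ 2) with hsdef
  have hs2 : s ^ 2 = 1 - γ ^ 2 := Real.sq_sqrt (by nlinarith)
  have hs0 : 0 ≤ s := Real.sqrt_nonneg _
  have hs1 : s < 1 := by nlinarith
  set ζ : ℂ := Complex.exp (2 * ↑π * Complex.I / L) with hζdef
  have hζ : IsPrimitiveRoot ζ L := Complex.isPrimitiveRoot_exp L (by omega)
  have hζn1 : ∀ n : ℕ, (1 : ℂ) + ζ ^ n ≠ 0 := by
    intro n h
    have h1 : ζ ^ n = -1 := by linear_combination h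
    have h2 : (ζ ^ n) ^ L = 1 := by
      rw [← pow_mul, mul_comm, pow_mul, hζ.pow_eq_one, one_pow]
    rw [h1, hLodd.neg_one_pow] at h2
    norm_num at h2
  -- per-factor identity
  have hfac : ∀ n ∈ Finset.range L,
      (1 + Complex.I * ((s * Real.tan ((n : ℝ) * π / L) : ℝ) : ℂ))
        = (((1 - s : ℝ) : ℂ) + ((1 + s : ℝ) : ℂ) * ζ ^ n) / (1 + ζ ^ n) := by
    intro n _
    set θ : ℝ := (n : ℝ) * π / L with hθdef
    have hz : ζ ^ n = Complex.exp (2 * (θ : ℂ) * Complex.I) := by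
      rw [hζdef, ← Complex.exp_nat_mul]
      congr 1
      push_cast [hθdef]
      field_simp
    have hcos : Real.cos θ ≠ 0 := by
      intro h
      apply hζn1 n
      have e1 : Complex.exp (2 * (θ : ℂ) * Complex.I)
          = Complex.exp ((θ:ℂ) * Complex.I) * Complex.exp ((θ:ℂ) * Complex.I) := by
        rw [← Complex.exp_add]; ring_nf
      have e2 : Complex.exp ((θ:ℂ) * Complex.I) * Complex.exp (-(θ:ℂ) * Complex.I) = 1 := by
        rw [← Complex.exp_add]; simp
      have key : (1 : ℂ) + ζ ^ n = Complex.exp ((θ : ℂ) * Complex.I) * (2 * Complex.cos θ) := by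
        rw [hz, Complex.cos]
        linear_combination e1 - e2
      rw [key, ← Complex.ofReal_cos, h]
      simp
    rw [eq_div_iff (hζn1 n), hz, Complex.exp_mul_I]
    have hsin2 : (Real.sin θ : ℂ) ^ 2 + (Real.cos θ : ℂ) ^ 2 = 1 := by
      exact_mod_cast Real.sin_sq_add_cos_sq θ
    have h2θ : (2 : ℂ) * θ = ((2 * θ : ℝ) : ℂ) := by push_cast; ring
    rw [h2θ, ← Complex.ofReal_cos, ← Complex.ofReal_sin, Real.cos_two_mul, Real.sin_two_mul,
      Real.tan_eq_sin_div_cos]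
    have hcosC : (Real.cos θ : ℂ) ≠ 0 := by exact_mod_cast hcos
    rw [Complex.ofReal_mul, Complex.ofReal_div, Complex.ofReal_sub, Complex.ofReal_mul,
      Complex.ofReal_pow, Complex.ofReal_one, Complex.ofReal_ofNat, Complex.ofReal_mul,
      Complex.ofReal_mul, Complex.ofReal_ofNat, Complex.ofReal_sub, Complex.ofReal_add]
    set S : ℂ := (Real.sin θ : ℂ)
    set c : ℂ := (Real.cos θ : ℂ)
    field_simp
    push_cast
    linear_combination (-2 * (s:ℂ) * c) * hsin2 + 2 * (s:ℂ) * c * S ^ 2 * Complex.I_sq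
  -- product of denominators
  have hprod1 : ∏ n ∈ Finset.range L, ((1 : ℂ) + ζ ^ n) = 2 := by
    have e : (1 : ℂ) ^ L = 1 := one_pow L
    have h := X_pow_sub_C_eq_prod hζ (by omega) e
    have h2 := congrArg (Polynomial.eval (-1 : ℂ)) h
    simp only [Polynomial.eval_prod, Polynomial.eval_sub, Polynomial.eval_pow,
      Polynomial.eval_X, Polynomial.eval_C, mul_one] at h2
    have h3 : ∏ n ∈ Finset.range L, ((-1 : ℂ) - ζ ^ n)
        = (-1) ^ L * ∏ n ∈ Finset.range L, ((1 : ℂ) + ζ ^ n) :=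
      calc ∏ n ∈ Finset.range L, ((-1 : ℂ) - ζ ^ n)
          = ∏ n ∈ Finset.range L, (-1 : ℂ) * ((1 : ℂ) + ζ ^ n) :=
            Finset.prod_congr rfl fun n _ => by ring
        _ = (-1) ^ L * ∏ n ∈ Finset.range L, ((1 : ℂ) + ζ ^ n) := by
            rw [Finset.prod_mul_distrib, Finset.prod_const, Finset.card_range]
    rw [h3, hLodd.neg_one_pow] at h2
    linear_combination h2
  -- product of numerators
  have hprod2 : ∏ n ∈ Finset.range L, (((1 - s : ℝ) : ℂ) + ((1 + s : ℝ) : ℂ) * ζ ^ n)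
      = ((1 - s : ℝ) : ℂ) ^ L + ((1 + s : ℝ) : ℂ) ^ L := by
    have e : ((1 + s : ℝ) : ℂ) ^ L = ((1 + s : ℝ) : ℂ) ^ L := rfl
    have h := X_pow_sub_C_eq_prod hζ (by omega) e
    have h2 := congrArg (Polynomial.eval (-((1 - s : ℝ) : ℂ))) h
    simp only [Polynomial.eval_prod, Polynomial.eval_sub, Polynomial.eval_pow,
      Polynomial.eval_X, Polynomial.eval_C] at h2
    have h3 : ∏ n ∈ Finset.range L, (-((1 - s : ℝ) : ℂ) - ζ ^ n * ((1 + s : ℝ) : ℂ))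
        = (-1) ^ L * ∏ n ∈ Finset.range L, (((1 - s : ℝ) : ℂ) + ((1 + s : ℝ) : ℂ) * ζ ^ n) :=
      calc ∏ n ∈ Finset.range L, (-((1 - s : ℝ) : ℂ) - ζ ^ n * ((1 + s : ℝ) : ℂ))
          = ∏ n ∈ Finset.range L, (-1 : ℂ) * (((1 - s : ℝ) : ℂ) + ((1 + s : ℝ) : ℂ) * ζ ^ n) :=
            Finset.prod_congr rfl fun n _ => by ring
        _ = (-1) ^ L * ∏ n ∈ Finset.range L, (((1 - s : ℝ) : ℂ) + ((1 + s : ℝ) : ℂ) * ζ ^ n) := by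
            rw [Finset.prod_mul_distrib, Finset.prod_const, Finset.card_range]
    rw [h3, hLodd.neg_one_pow, hLodd.neg_pow] at h2
    linear_combination h2
  -- LHS
  have hLHS : ∏ n ∈ Finset.range L,
      (1 + Complex.I * ((s * Real.tan ((n : ℝ) * π / L) : ℝ) : ℂ))
      = (((1 - s : ℝ) : ℂ) ^ L + ((1 + s : ℝ) : ℂ) ^ L) / 2 := by
    rw [Finset.prod_congr rfl hfac, Finset.prod_div_distrib, hprod1, hprod2]
  -- RHS
  have hγ0' : (γ : ℂ) ≠ 0 := by exact_mod_cast hγ0.ne'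
  have h1s : (1 : ℝ) - s ≠ 0 := by linarith
  set u : ℝ := (1 - s) / γ with hudef
  have hu0 : u ≠ 0 := div_ne_zero h1s hγ0.ne'
  have huC : (u : ℂ) ≠ 0 := by exact_mod_cast hu0
  set w : ℂ := Complex.log (u : ℂ) with hwdef
  have hew : Complex.exp w = (u : ℂ) := Complex.exp_log huC
  have hcosw : Complex.cos (-Complex.I * w) = ((1 / γ : ℝ) : ℂ) := by
    rw [Complex.cos]
    have e1 : -Complex.I * w * Complex.I = w := by
      rw [mul_assoc, mul_comm w, ← mul_assoc, neg_mul, Complex.I_mul_I]; ring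
    have e2 : -(-Complex.I * w) * Complex.I = -w := by
      rw [neg_mul, e1]
    rw [e1, e2, hew, Complex.exp_neg, hew]
    push_cast [hudef]
    have hs2C : (s : ℂ) ^ 2 = 1 - (γ : ℂ) ^ 2 := by exact_mod_cast hs2
    have h1sC : (1 : ℂ) - (s : ℂ) ≠ 0 := by exact_mod_cast h1s
    field_simp
    linear_combination hs2C
  have hT : (((Polynomial.Chebyshev.T ℝ (2 * l + 1)).eval (1 / γ) : ℝ) : ℂ)
      = ((u : ℂ) ^ L + ((u : ℂ)⁻¹) ^ L) / 2 := by
    rw [Polynomial.Chebyshev.complex_ofReal_eval_T, ← hcosw,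
      Polynomial.Chebyshev.T_complex_cos, Complex.cos]
    have eA : ((2 * (l : ℤ) + 1 : ℤ) : ℂ) * (-Complex.I * w) * Complex.I = (L : ℕ) * w := by
      push_cast [hLdef]
      linear_combination (-(2 * (l:ℂ) + 1) * w) * Complex.I_sq
    have eB : -(((2 * (l : ℤ) + 1 : ℤ) : ℂ) * (-Complex.I * w)) * Complex.I = (L : ℕ) * (-w) := by
      push_cast [hLdef]
      linear_combination ((2 * (l:ℂ) + 1) * w) * Complex.I_sq
    rw [eA, eB, Complex.exp_nat_mul, Complex.exp_nat_mul, hew, Complex.exp_neg, hew]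
  rw [show (2 * (l:ℝ) + 1 : ℝ) = ((L:ℕ):ℝ) by push_cast [hLdef]; ring]
  rw [hT]
  rw [hLHS]
  have hgu1 : (γ : ℂ) * (u : ℂ) = ((1 - s : ℝ) : ℂ) := by
    push_cast [hudef]
    field_simp
  have hgu2 : (γ : ℂ) * ((u : ℂ))⁻¹ = ((1 + s : ℝ) : ℂ) := by
    have hs2C : (s : ℂ) ^ 2 = 1 - (γ : ℂ) ^ 2 := by exact_mod_cast hs2
    have h1sC : (1 : ℂ) - (s : ℂ) ≠ 0 := by
      intro h; exact h1s (by exact_mod_cast h)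
    push_cast [hudef]
    rw [inv_div]
    field_simp [h1sC]
    linear_combination hs2C
  have : ((γ : ℂ)) ^ L * (((u : ℂ)) ^ L + ((u : ℂ)⁻¹) ^ L)
      = ((1 - s : ℝ) : ℂ) ^ L + ((1 + s : ℝ) : ℂ) ^ L := by
    rw [mul_add, ← mul_pow, ← mul_pow, hgu1, hgu2]
  push_cast at this ⊢
  linear_combination -this / 2
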